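/- Suppose κ₁ > 0 > κ₂ and a, A, B > 0 satisfy: for all τ ≥ T₀ ≥ 0, a ≤ C·e^{τκ₁}·A + C·e^{τκ₂}·B. Then, with α₁ = -κ₂/(κ₁ - κ₂) ∈ (0,1), one has a ≤ (2C)^{α₁+1}·e^{T₀ κ₁}·B^{1-α₁}·A^{α₁} whenever a ≤ B. -/

import Mathlib

theorem local_interpolation_step (a A B C T₀ κ₁ κ₂ : ℝ)
    (ha : 0 < a) (hA : 0 < A) (hB : 0 < B) (hC : 1 ≤ C) (hT₀ : 0 ≤ T₀)
    (hκ₁ : 0 < κ₁) (hκ₂ : κ₂ < 0)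
    (h : ∀ τ : ℝ, T₀ ≤ τ → a ≤ C * Real.exp (τ * κ₁) * A + C * Real.exp (τ * κ₂) * B)
    (haB : a ≤ B) :
    a ≤ (2 * C) ^ (-κ₂ / (κ₁ - κ₂) + 1) * Real.exp (T₀ * κ₁) *
        B ^ (1 - (-κ₂ / (κ₁ - κ₂))) * A ^ (-κ₂ / (κ₁ - κ₂)) := by
  set α : ℝ := -κ₂ / (κ₁ - κ₂) with hα_def
  have hd : 0 < κ₁ - κ₂ := by linarith
  have hα : 0 < α := div_pos (by linarith) hd
  have hα1 : α < 1 := by rw [hα_def, div_lt_one hd]; linarith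
  have h2C : (1:ℝ) < 2 * C := by linarith
  have hC0 : 0 < C := by linarith
  have hκ₂ne : κ₂ ≠ 0 := ne_of_lt hκ₂
  set la := Real.log a with hla
  set lA := Real.log A with hlA
  set lB := Real.log B with hlB
  set l2C := Real.log (2 * C) with hl2C_def
  have hl2C : 0 ≤ l2C := Real.log_nonneg (le_of_lt h2C)
  have hTκ : 0 ≤ T₀ * κ₁ := mul_nonneg hT₀ hκ₁.le
  -- the "key" halving lemma in log form
  have key : ∀ τ : ℝ, T₀ ≤ τ → C * Real.exp (τ * κ₂) * B ≤ a / 2 →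
      la ≤ l2C + τ * κ₁ + lA := by
    intro τ hτ hhalf
    have h1 := h τ hτ
    have h2 : a ≤ 2 * C * Real.exp (τ * κ₁) * A := by linarith
    have hpos : 0 < 2 * C * Real.exp (τ * κ₁) * A := by positivity
    have hlog : la ≤ Real.log (2 * C * Real.exp (τ * κ₁) * A) :=
      Real.log_le_log ha h2
    rw [Real.log_mul (by positivity) (ne_of_gt hA),
        Real.log_mul (by positivity) (Real.exp_ne_zero _), Real.log_exp] at hlog
    linarith [hlog]
  -- main log inequality
  have hfinal : la ≤ (α + 1) * l2C + T₀ * κ₁ + (1 - α) * lB + α * lA := by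
    set x : ℝ := a / (2 * C * B) with hx_def
    have hx : 0 < x := by positivity
    set L : ℝ := Real.log x / κ₂ with hL_def
    have hlogx : Real.log x = la - (l2C + lB) := by
      rw [hx_def, Real.log_div (ne_of_gt ha) (by positivity),
          Real.log_mul (by positivity) (ne_of_gt hB)]
    by_cases hcase : L ≤ T₀
    · -- case 1 : τ = T₀
      have hexp : Real.exp (T₀ * κ₂) ≤ x := by
        have : Real.log x ≥ T₀ * κ₂ := by
          rw [hL_def, div_le_iff_of_neg hκ₂] at hcase
          linarith [hcase]
        calc Real.exp (T₀ * κ₂) ≤ Real.exp (Real.log x) := Real.exp_le_exp.mpr this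
          _ = x := Real.exp_log hx
      have hhalf : C * Real.exp (T₀ * κ₂) * B ≤ a / 2 := by
        have h1 : C * Real.exp (T₀ * κ₂) * B ≤ C * x * B := by
          have := mul_le_mul_of_nonneg_left hexp hC0.le
          nlinarith [this, hB]
        have h2 : C * x * B = a / 2 := by
          rw [hx_def]; field_simp
        linarith
      have h1 := key T₀ le_rfl hhalf
      have h2 : la ≤ lB := Real.log_le_log ha haB
      nlinarith [mul_le_mul_of_nonneg_left h1 hα.le,
        mul_le_mul_of_nonneg_left h2 (by linarith : (0:ℝ) ≤ 1 - α),
        mul_nonneg hα.le hl2C, mul_nonneg (by linarith : (0:ℝ) ≤ 1 - α) hTκ, hl2C, hTκ]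
    · -- case 2 : τ = L
      push_neg at hcase
      have hhalf : C * Real.exp (L * κ₂) * B ≤ a / 2 := by
        have hLκ : L * κ₂ = Real.log x := div_mul_cancel₀ _ hκ₂ne
        rw [hLκ, Real.exp_log hx, hx_def]
        have : C * (a / (2 * C * B)) * B = a / 2 := by field_simp
        linarith [this.le]
      have hlog := key L hcase.le hhalf
      rw [hL_def, hlogx] at hlog
      -- hlog : la ≤ l2C + (la - (l2C + lB)) / κ₂ * κ₁ + lA
      have h3 : (-κ₂) * la ≤ (-κ₂) * (l2C + (la - (l2C + lB)) / κ₂ * κ₁ + lA) :=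
        mul_le_mul_of_nonneg_left hlog (by linarith)
      have h4 : (-κ₂) * (l2C + (la - (l2C + lB)) / κ₂ * κ₁ + lA)
          = -(κ₂ * l2C) - κ₁ * la + κ₁ * l2C + κ₁ * lB - κ₂ * lA := by
        field_simp; ring
      rw [h4] at h3
      have hmid : (κ₁ - κ₂) * la ≤ (κ₁ - κ₂) * l2C + (-κ₂) * lA + κ₁ * lB := by
        linarith
      have hmid2 : la ≤ l2C + α * lA + (1 - α) * lB := by
        rw [← mul_le_mul_iff_right₀ hd]
        have expand : (κ₁ - κ₂) * (l2C + α * lA + (1 - α) * lB)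
            = (κ₁ - κ₂) * l2C + (-κ₂) * lA + κ₁ * lB := by
          rw [hα_def]; field_simp; ring
        rw [expand]; exact hmid
      linarith [mul_nonneg hα.le hl2C, hTκ]
  -- convert back from logs
  have hRHSpos : 0 < (2 * C) ^ (α + 1) * Real.exp (T₀ * κ₁) * B ^ (1 - α) * A ^ α := by
    positivity
  have hRHSlog : Real.log ((2 * C) ^ (α + 1) * Real.exp (T₀ * κ₁) * B ^ (1 - α) * A ^ α)
      = (α + 1) * l2C + T₀ * κ₁ + (1 - α) * lB + α * lA := by
    rw [Real.log_mul (by positivity) (by positivity),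
        Real.log_mul (by positivity) (by positivity),
        Real.log_mul (by positivity) (by positivity),
        Real.log_rpow (by linarith), Real.log_exp, Real.log_rpow hB, Real.log_rpow hA]
  calc a = Real.exp la := (Real.exp_log ha).symm
    _ ≤ Real.exp ((α + 1) * l2C + T₀ * κ₁ + (1 - α) * lB + α * lA) :=
        Real.exp_le_exp.mpr hfinal
    _ = (2 * C) ^ (α + 1) * Real.exp (T₀ * κ₁) * B ^ (1 - α) * A ^ α := by
        rw [← hRHSlog, Real.exp_log hRHSpos]
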